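/- For integers d ≥ 2 and n ≥ 1, there exists a unique r* in (0, λ_d) such that f_{d,n}(r*) = g_d(r*); moreover f_{d,n} < g_d on (0, r*), g_d < f_{d,n} on (r*, λ_d], and r* > ρ(d,n), where ρ(d,n) is the unique positive root of (d-1)ρ^{d+1} + dnρ^{d-1} - n = 0. -/

import Mathlib

set_option maxHeartbeats 1000000

open Real Set

noncomputable def lam (d : ℕ) : ℝ := (d : ℝ) ^ (-(1:ℝ) / ((d:ℝ) - 1))

noncomputable def fdn (d n : ℕ) (r : ℝ) : ℝ :=
  (r - r ^ d) / (r ^ (d + 1) + (n : ℝ)) ^ ((d : ℝ) / ((d : ℝ) + 1))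

noncomputable def gd (d : ℕ) (r : ℝ) : ℝ :=
  ((lam d / r) ^ (((d : ℝ) ^ 2 - 1) / 2) - 1) ^ ((2 : ℝ) / ((d : ℝ) + 1))

noncomputable def phi (d n : ℕ) (r : ℝ) : ℝ :=
  r ^ (((d:ℝ)^2 - 1)/2) +
    (r ^ d - r ^ (2*d - 1)) ^ (((d:ℝ)+1)/2) / (r ^ (d+1) + (n:ℝ)) ^ ((d:ℝ)/2)

noncomputable def phi2 (d n : ℕ) (r : ℝ) : ℝ :=
  (r ^ d - r ^ (2*d - 1)) ^ (((d:ℝ)+1)/2) / (r ^ (d+1) + (n:ℝ)) ^ ((d:ℝ)/2)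

lemma dcast (d : ℕ) (hd : 2 ≤ d) : (2:ℝ) ≤ (d:ℝ) := by exact_mod_cast hd

lemma lam_pos (d : ℕ) (hd : 2 ≤ d) : 0 < lam d :=
  Real.rpow_pos_of_pos (by positivity) _

lemma lam_lt_one (d : ℕ) (hd : 2 ≤ d) : lam d < 1 := by
  have h1 : (1:ℝ) < d := by have := dcast d hd; linarith
  have h2 : -(1:ℝ) / ((d:ℝ) - 1) < 0 := by
    apply div_neg_of_neg_of_pos <;> [norm_num; linarith]
  exact Real.rpow_lt_one_of_one_lt_of_neg h1 h2

lemma lam_pow (d : ℕ) (hd : 2 ≤ d) : lam d ^ (d - 1) = ((d:ℝ))⁻¹ := by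
  have hD : (0:ℝ) ≤ (d:ℝ) := by positivity
  have hne : ((d:ℝ) - 1) ≠ 0 := by have := dcast d hd; linarith
  have hcast : ((d - 1 : ℕ) : ℝ) = (d:ℝ) - 1 := by
    have : (1:ℕ) ≤ d := by omega
    push_cast [Nat.cast_sub this]; ring
  rw [lam, ← Real.rpow_natCast ((d:ℝ) ^ (-(1:ℝ)/((d:ℝ)-1))) (d-1), ← Real.rpow_mul hD,
    hcast]
  rw [show -(1:ℝ)/((d:ℝ)-1) * ((d:ℝ)-1) = -1 by field_simp]
  exact Real.rpow_neg_one _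


lemma a_eq (d : ℕ) (hd : 2 ≤ d) :
    ((d:ℝ)^2 - 1)/2 = ((d - 1 : ℕ) : ℝ) * (((d:ℝ)+1)/2) := by
  have : (1:ℕ) ≤ d := by omega
  push_cast [Nat.cast_sub this]; ring

lemma a_pos (d : ℕ) (hd : 2 ≤ d) : 0 < ((d:ℝ)^2 - 1)/2 := by
  have := dcast d hd; nlinarith

lemma p_ge_one (d : ℕ) (hd : 2 ≤ d) : 1 ≤ ((d:ℝ)+1)/2 := by
  have := dcast d hd; linarith

lemma f_pos (d n : ℕ) (hd : 2 ≤ d) {r : ℝ} (hr0 : 0 < r) (hr1 : r < 1) :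
    0 < fdn d n r := by
  apply div_pos
  · have : r ^ d < r ^ 1 := pow_lt_pow_right_of_lt_one₀ hr0 hr1 (by omega)
    simpa using sub_pos.2 this
  · exact Real.rpow_pos_of_pos (by positivity) _

lemma g_inner_nonneg (d : ℕ) (hd : 2 ≤ d) {r : ℝ} (hr0 : 0 < r) (hrL : r ≤ lam d) :
    1 ≤ (lam d / r) ^ (((d:ℝ)^2 - 1)/2) := by
  have h1 : (1:ℝ) ≤ lam d / r := (one_le_div hr0).2 hrL
  calc (1:ℝ) = 1 ^ (((d:ℝ)^2 - 1)/2) := (Real.one_rpow _).symm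
  _ ≤ (lam d / r) ^ (((d:ℝ)^2 - 1)/2) :=
      Real.rpow_le_rpow zero_le_one h1 (a_pos d hd).le

lemma g_nonneg (d : ℕ) (hd : 2 ≤ d) {r : ℝ} (hr0 : 0 < r) (hrL : r ≤ lam d) :
    0 ≤ gd d r :=
  Real.rpow_nonneg (by linarith [g_inner_nonneg d hd hr0 hrL]) _

lemma chi_g (d : ℕ) (hd : 2 ≤ d) {r : ℝ} (hr0 : 0 < r) (hrL : r ≤ lam d) :
    r ^ (((d:ℝ)^2 - 1)/2) * (gd d r) ^ (((d:ℝ)+1)/2) + r ^ (((d:ℝ)^2 - 1)/2)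
      = lam d ^ (((d:ℝ)^2 - 1)/2) := by
  have hX : 0 ≤ (lam d / r) ^ (((d:ℝ)^2 - 1)/2) - 1 := by
    linarith [g_inner_nonneg d hd hr0 hrL]
  have hD1 : ((d:ℝ) + 1) ≠ 0 := by have := dcast d hd; linarith
  have hgp : (gd d r) ^ (((d:ℝ)+1)/2) = (lam d / r) ^ (((d:ℝ)^2 - 1)/2) - 1 := by
    rw [gd, ← Real.rpow_mul hX,
      show (2:ℝ)/((d:ℝ)+1) * (((d:ℝ)+1)/2) = 1 by field_simp, Real.rpow_one]
  rw [hgp, mul_sub, mul_one, sub_add_cancel, ← Real.mul_rpow hr0.le (div_nonneg (lam_pos d hd).le hr0.le),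
    mul_div_cancel₀ _ (ne_of_gt hr0)]

lemma chi_f (d n : ℕ) (hd : 2 ≤ d) {r : ℝ} (hr0 : 0 < r) (hr1 : r < 1) :
    r ^ (((d:ℝ)^2 - 1)/2) * (fdn d n r) ^ (((d:ℝ)+1)/2) + r ^ (((d:ℝ)^2 - 1)/2)
      = phi d n r := by
  have hnum : (0:ℝ) ≤ r - r ^ d := by
    have : r ^ d ≤ r ^ 1 := pow_le_pow_of_le_one hr0.le hr1.le (by omega)
    simpa using sub_nonneg.2 this
  have hW : (0:ℝ) ≤ r ^ (d+1) + (n:ℝ) := by positivity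
  have hD1 : ((d:ℝ) + 1) ≠ 0 := by have := dcast d hd; linarith
  have hfp : (fdn d n r) ^ (((d:ℝ)+1)/2)
      = (r - r ^ d) ^ (((d:ℝ)+1)/2) / (r ^ (d+1) + (n:ℝ)) ^ ((d:ℝ)/2) := by
    rw [fdn, Real.div_rpow hnum (Real.rpow_nonneg hW _), ← Real.rpow_mul hW,
      show (d:ℝ)/((d:ℝ)+1) * (((d:ℝ)+1)/2) = (d:ℝ)/2 by field_simp]
  have hra : r ^ (((d:ℝ)^2 - 1)/2) = (r ^ (d-1) : ℝ) ^ (((d:ℝ)+1)/2) := by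
    rw [a_eq d hd, Real.rpow_mul hr0.le, Real.rpow_natCast]
  have hmul : (r ^ (d-1) : ℝ) * (r - r ^ d) = r ^ d - r ^ (2*d - 1) := by
    rw [mul_sub, ← pow_succ, ← pow_add, show d - 1 + 1 = d from by omega,
      show d - 1 + d = 2*d - 1 from by omega]
  rw [phi, hfp, hra, mul_div_assoc',
    ← Real.mul_rpow (by positivity) hnum, hmul]
  ring

lemma key_lt (d n : ℕ) (hd : 2 ≤ d) {r : ℝ} (hr0 : 0 < r) (hrL : r ≤ lam d) :
    (fdn d n r < gd d r ↔ phi d n r < lam d ^ (((d:ℝ)^2 - 1)/2)) := by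
  have hr1 : r < 1 := lt_of_le_of_lt hrL (lam_lt_one d hd)
  have hp : (0:ℝ) < ((d:ℝ)+1)/2 := lt_of_lt_of_le one_pos (p_ge_one d hd)
  have hra : (0:ℝ) < r ^ (((d:ℝ)^2 - 1)/2) := Real.rpow_pos_of_pos hr0 _
  rw [← chi_f d n hd hr0 hr1, ← chi_g d hd hr0 hrL, add_lt_add_iff_right,
    mul_lt_mul_iff_right₀ hra,
    Real.rpow_lt_rpow_iff (f_pos d n hd hr0 hr1).le (g_nonneg d hd hr0 hrL) hp]

lemma key_gt (d n : ℕ) (hd : 2 ≤ d) {r : ℝ} (hr0 : 0 < r) (hrL : r ≤ lam d) :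
    (gd d r < fdn d n r ↔ lam d ^ (((d:ℝ)^2 - 1)/2) < phi d n r) := by
  have hr1 : r < 1 := lt_of_le_of_lt hrL (lam_lt_one d hd)
  have hp : (0:ℝ) < ((d:ℝ)+1)/2 := lt_of_lt_of_le one_pos (p_ge_one d hd)
  have hra : (0:ℝ) < r ^ (((d:ℝ)^2 - 1)/2) := Real.rpow_pos_of_pos hr0 _
  rw [← chi_f d n hd hr0 hr1, ← chi_g d hd hr0 hrL, add_lt_add_iff_right,
    mul_lt_mul_iff_right₀ hra,
    Real.rpow_lt_rpow_iff (g_nonneg d hd hr0 hrL) (f_pos d n hd hr0 hr1).le hp]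

lemma key_eq (d n : ℕ) (hd : 2 ≤ d) {r : ℝ} (hr0 : 0 < r) (hrL : r ≤ lam d) :
    (fdn d n r = gd d r ↔ phi d n r = lam d ^ (((d:ℝ)^2 - 1)/2)) := by
  constructor
  · intro h
    rw [← chi_f d n hd hr0 (lt_of_le_of_lt hrL (lam_lt_one d hd)),
      ← chi_g d hd hr0 hrL, h]
  · intro h
    rcases lt_trichotomy (fdn d n r) (gd d r) with hlt | he | hgt
    · exact absurd ((key_lt d n hd hr0 hrL).1 hlt) (by rw [h]; exact lt_irrefl _)
    · exact he
    · exact absurd ((key_gt d n hd hr0 hrL).1 hgt) (by rw [h]; exact lt_irrefl _)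

lemma s_le (d : ℕ) (hd : 2 ≤ d) {r : ℝ} (hr0 : 0 < r) (hrL : r ≤ lam d) :
    (d:ℝ) * r ^ (d - 1) ≤ 1 := by
  have h : r ^ (d-1) ≤ lam d ^ (d-1) := pow_le_pow_left₀ hr0.le hrL _
  rw [lam_pow d hd] at h
  have hD : (0:ℝ) < d := by have := dcast d hd; linarith
  calc (d:ℝ) * r ^ (d-1) ≤ (d:ℝ) * ((d:ℝ))⁻¹ := by
        exact mul_le_mul_of_nonneg_left h hD.le
  _ = 1 := mul_inv_cancel₀ (ne_of_gt hD)

lemma u_pos (d : ℕ) (hd : 2 ≤ d) {r : ℝ} (hr0 : 0 < r) (hr1 : r < 1) :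
    0 < r ^ d - r ^ (2*d - 1) := by
  have : r ^ (2*d - 1) < r ^ d := pow_lt_pow_right_of_lt_one₀ hr0 hr1 (by omega)
  linarith

lemma hasDeriv_phi2 (d n : ℕ) (hd : 2 ≤ d) (hn : 1 ≤ n) {r : ℝ}
    (hr0 : 0 < r) (hr1 : r < 1) :
    HasDerivAt (phi2 d n)
      (((((d:ℕ):ℝ) * r ^ (d-1) - ((2*d-1:ℕ):ℝ) * r ^ (2*d-1-1)) * (((d:ℝ)+1)/2) *
          (r ^ d - r ^ (2*d - 1)) ^ (((d:ℝ)+1)/2 - 1) * (r ^ (d+1) + (n:ℝ)) ^ ((d:ℝ)/2)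
        - (r ^ d - r ^ (2*d - 1)) ^ (((d:ℝ)+1)/2) *
          ((((d+1:ℕ):ℝ) * r ^ (d+1-1)) * ((d:ℝ)/2) * (r ^ (d+1) + (n:ℝ)) ^ ((d:ℝ)/2 - 1)))
        / ((r ^ (d+1) + (n:ℝ)) ^ ((d:ℝ)/2)) ^ 2) r := by
  have hu : HasDerivAt (fun x : ℝ => x ^ d - x ^ (2*d - 1))
      (((d:ℕ):ℝ) * r ^ (d-1) - ((2*d-1:ℕ):ℝ) * r ^ (2*d-1-1)) r :=
    (hasDerivAt_pow d r).sub (hasDerivAt_pow (2*d-1) r)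
  have hw : HasDerivAt (fun x : ℝ => x ^ (d+1) + (n:ℝ)) (((d+1:ℕ):ℝ) * r ^ (d+1-1)) r :=
    (hasDerivAt_pow (d+1) r).add_const _
  have hune : r ^ d - r ^ (2*d - 1) ≠ 0 := ne_of_gt (u_pos d hd hr0 hr1)
  have hwpos : (0:ℝ) < r ^ (d+1) + (n:ℝ) := by positivity
  have hnum := hu.rpow_const (p := ((d:ℝ)+1)/2) (Or.inl hune)
  have hden := hw.rpow_const (p := (d:ℝ)/2) (Or.inl (ne_of_gt hwpos))
  have hdne : (r ^ (d+1) + (n:ℝ)) ^ ((d:ℝ)/2) ≠ 0 :=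
    ne_of_gt (Real.rpow_pos_of_pos hwpos _)
  have := hnum.div hden hdne
  exact this

lemma rpow_split {x : ℝ} (hx : 0 < x) (q : ℝ) : x ^ q = x ^ (q-1) * x := by
  nth_rewrite 1 [show q = (q-1)+1 by ring]
  rw [Real.rpow_add hx, Real.rpow_one]

lemma numer_nonneg (Dr S r nn : ℝ) (hD : 2 ≤ Dr) (hS0 : 0 < S) (hDS : Dr*S ≤ 1)
    (hr0 : 0 < r) (hr1 : r < 1) (hn : 1 ≤ nn) :
    0 ≤ (Dr * S - (2*Dr - 1) * S^2) * ((Dr+1)/2) * (S*r - S^2*r) ^ ((Dr+1)/2 - 1) *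
          (S*r^2 + nn) ^ (Dr/2)
        - (S*r - S^2*r) ^ ((Dr+1)/2) *
          (((Dr+1) * (S*r)) * (Dr/2) * (S*r^2 + nn) ^ (Dr/2 - 1)) := by
  have hS1 : S < 1 := by nlinarith
  have hu : 0 < S*r - S^2*r := by
    have := mul_pos (mul_pos hS0 hr0) (sub_pos.2 hS1); nlinarith
  have hW : 0 < S*r^2 + nn := by nlinarith
  have hA : 0 ≤ (S*r - S^2*r) ^ ((Dr+1)/2 - 1) := Real.rpow_nonneg hu.le _
  have hB : 0 ≤ (S*r^2 + nn) ^ (Dr/2 - 1) := Real.rpow_nonneg hW.le _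
  have keyq : 0 ≤ (Dr - (2*Dr - 1)*S)*nn - (Dr - 1)*S^2*r^2 := by
    have h1 : Dr - (2*Dr - 1)*S > 0 := by nlinarith
    have h2 : (Dr - (2*Dr - 1)*S)*nn ≥ Dr - (2*Dr - 1)*S := by nlinarith
    have h3 : (Dr - 1)*S^2*r^2 ≤ (Dr - 1)*S^2 := by
      have h4 : (0:ℝ) ≤ 1 - r^2 := by nlinarith
      have h5 : (0:ℝ) ≤ (Dr - 1) * S^2 := by nlinarith [sq_nonneg S]
      nlinarith [mul_nonneg h5 h4]
    nlinarith [sq_nonneg (Dr*S), mul_pos hS0 hS0]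
  rw [rpow_split hu ((Dr+1)/2), rpow_split hW (Dr/2)]
  have hfac : (Dr * S - (2*Dr - 1) * S^2) * ((Dr+1)/2) * (S*r - S^2*r) ^ ((Dr+1)/2 - 1) *
          ((S*r^2 + nn) ^ (Dr/2 - 1) * (S*r^2 + nn))
        - (S*r - S^2*r) ^ ((Dr+1)/2 - 1) * (S*r - S^2*r) *
          (((Dr+1) * (S*r)) * (Dr/2) * (S*r^2 + nn) ^ (Dr/2 - 1))
      = (S*r - S^2*r) ^ ((Dr+1)/2 - 1) * (S*r^2 + nn) ^ (Dr/2 - 1) *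
          (((Dr+1)/2) * S * ((Dr - (2*Dr - 1)*S)*nn - (Dr - 1)*S^2*r^2)) := by
    ring
  rw [hfac]
  have : 0 ≤ ((Dr+1)/2) * S * ((Dr - (2*Dr - 1)*S)*nn - (Dr - 1)*S^2*r^2) := by
    apply mul_nonneg (mul_nonneg (by linarith) hS0.le) keyq
  exact mul_nonneg (mul_nonneg hA hB) this

lemma phi2_mono (d n : ℕ) (hd : 2 ≤ d) (hn : 1 ≤ n) :
    MonotoneOn (phi2 d n) (Set.Ioc 0 (lam d)) := by
  have hL1 := lam_lt_one d hd
  apply monotoneOn_of_deriv_nonneg (convex_Ioc _ _)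
  · intro r hr
    exact (hasDeriv_phi2 d n hd hn hr.1
      (lt_of_le_of_lt hr.2 hL1)).continuousAt.continuousWithinAt
  · intro r hr
    rw [interior_Ioc] at hr
    exact (hasDeriv_phi2 d n hd hn hr.1
      (hr.2.trans hL1)).differentiableAt.differentiableWithinAt
  · intro r hr
    rw [interior_Ioc] at hr
    obtain ⟨hr0, hrL⟩ := hr
    have hr1 : r < 1 := hrL.trans hL1
    rw [(hasDeriv_phi2 d n hd hn hr0 hr1).deriv]
    apply div_nonneg _ (sq_nonneg _)
    have hcast1 : ((2*d-1:ℕ):ℝ) = 2*(d:ℝ) - 1 := by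
      have h : (1:ℕ) ≤ 2*d := by omega
      push_cast [Nat.cast_sub h]; ring
    have hcast2 : ((d+1:ℕ):ℝ) = (d:ℝ) + 1 := by push_cast; ring
    have hE1 : r ^ (2*d-1-1) = (r^(d-1))^2 := by rw [← pow_mul]; congr 1; omega
    have hE2 : r ^ d = r^(d-1) * r := by rw [← pow_succ]; congr 1; omega
    have hE3 : r ^ (d+1) = r^(d-1) * r^2 := by rw [← pow_add]; congr 1; omega
    have hE4 : r ^ (2*d-1) = (r^(d-1))^2 * r := by
      rw [← pow_mul, ← pow_succ]; congr 1; omega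
    have hE5 : r ^ (d+1-1) = r^(d-1) * r := by rw [← pow_succ]; congr 1; omega
    rw [hcast1, hcast2, hE1, hE5, hE4, hE2, hE3]
    exact numer_nonneg (d:ℝ) (r^(d-1)) r (n:ℝ) (dcast d hd) (pow_pos hr0 _)
      (s_le d hd hr0 hrL.le) hr0 hr1 (by exact_mod_cast hn)

lemma phi_strictMono (d n : ℕ) (hd : 2 ≤ d) (hn : 1 ≤ n) :
    StrictMonoOn (phi d n) (Set.Ioc 0 (lam d)) := by
  intro x hx y hy hxy
  have h1 : x ^ (((d:ℝ)^2-1)/2) < y ^ (((d:ℝ)^2-1)/2) :=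
    Real.rpow_lt_rpow hx.1.le hxy (a_pos d hd)
  have h2 := phi2_mono d n hd hn hx hy hxy.le
  simp only [phi, phi2] at *
  exact add_lt_add_of_lt_of_le h1 h2

lemma one_le_a (d : ℕ) (hd : 2 ≤ d) : 1 ≤ ((d:ℝ)^2 - 1)/2 := by
  have := dcast d hd; nlinarith

lemma phi_le (d n : ℕ) (hd : 2 ≤ d) (hn : 1 ≤ n) {r : ℝ}
    (hr0 : 0 < r) (hr1 : r < 1) : phi d n r ≤ 2*r := by
  have hn1 : (1:ℝ) ≤ (n:ℝ) := by exact_mod_cast hn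
  have hrd : r ^ d ≤ r := by
    have : r ^ d ≤ r ^ 1 := pow_le_pow_of_le_one hr0.le hr1.le (by omega)
    simpa using this
  have h1 : r ^ (((d:ℝ)^2 - 1)/2) ≤ r := by
    have := Real.rpow_le_rpow_of_exponent_ge hr0 hr1.le (one_le_a d hd)
    simpa using this
  have hu0 : (0:ℝ) ≤ r ^ d - r ^ (2*d - 1) := (u_pos d hd hr0 hr1).le
  have hup : (r ^ d - r ^ (2*d - 1)) ^ (((d:ℝ)+1)/2) ≤ r := by
    have e1 : (r ^ d - r ^ (2*d - 1)) ^ (((d:ℝ)+1)/2) ≤ (r ^ d) ^ (((d:ℝ)+1)/2) :=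
      Real.rpow_le_rpow hu0 (by nlinarith [pow_nonneg hr0.le (2*d-1)]) (by linarith [p_ge_one d hd])
    have e2 : (r ^ d) ^ (((d:ℝ)+1)/2) ≤ (r ^ d) ^ (1:ℝ) :=
      Real.rpow_le_rpow_of_exponent_ge (pow_pos hr0 d)
        (by calc r ^ d ≤ r := hrd
              _ ≤ 1 := hr1.le) (p_ge_one d hd)
    calc (r ^ d - r ^ (2*d - 1)) ^ (((d:ℝ)+1)/2) ≤ (r ^ d) ^ (1:ℝ) := le_trans e1 e2
    _ = r ^ d := Real.rpow_one _
    _ ≤ r := hrd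
  have hden : (1:ℝ) ≤ (r ^ (d+1) + (n:ℝ)) ^ ((d:ℝ)/2) := by
    have hW : (1:ℝ) ≤ r ^ (d+1) + (n:ℝ) := by have := pow_pos hr0 (d+1); linarith
    calc (1:ℝ) = 1 ^ ((d:ℝ)/2) := (Real.one_rpow _).symm
    _ ≤ (r ^ (d+1) + (n:ℝ)) ^ ((d:ℝ)/2) :=
        Real.rpow_le_rpow zero_le_one hW (by positivity)
  have h2 : (r ^ d - r ^ (2*d - 1)) ^ (((d:ℝ)+1)/2) / (r ^ (d+1) + (n:ℝ)) ^ ((d:ℝ)/2)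
      ≤ r := by
    calc _ ≤ (r ^ d - r ^ (2*d - 1)) ^ (((d:ℝ)+1)/2) :=
          div_le_self (Real.rpow_nonneg hu0 _) hden
    _ ≤ r := hup
  rw [phi]; linarith

lemma exists_rs (d n : ℕ) (hd : 2 ≤ d) (hn : 1 ≤ n) :
    ∃ rs ∈ Set.Ioo (0:ℝ) (lam d), phi d n rs = lam d ^ (((d:ℝ)^2 - 1)/2) := by
  have hL0 := lam_pos d hd
  have hL1 := lam_lt_one d hd
  set T := lam d ^ (((d:ℝ)^2 - 1)/2) with hT
  have hT0 : 0 < T := Real.rpow_pos_of_pos hL0 _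
  set r₀ := min (lam d / 2) (T/4) with hr₀
  have hr₀0 : 0 < r₀ := lt_min (by linarith) (by linarith)
  have hr₀L : r₀ < lam d := lt_of_le_of_lt (min_le_left _ _) (by linarith)
  have h1 : phi d n r₀ < T := by
    have := phi_le d n hd hn hr₀0 (lt_trans hr₀L hL1)
    have h2 : r₀ ≤ T/4 := min_le_right _ _
    linarith
  have h2 : T < phi d n (lam d) := by
    have hu := u_pos d hd hL0 hL1
    have hpos : 0 < (lam d ^ d - lam d ^ (2*d - 1)) ^ (((d:ℝ)+1)/2)
        / (lam d ^ (d+1) + (n:ℝ)) ^ ((d:ℝ)/2) :=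
      div_pos (Real.rpow_pos_of_pos hu _) (Real.rpow_pos_of_pos (by positivity) _)
    rw [phi]; simp only [← hT]; linarith
  have hcont : ContinuousOn (phi d n) (Set.Icc r₀ (lam d)) := by
    intro r hr
    have hr0 : 0 < r := lt_of_lt_of_le hr₀0 hr.1
    have hr1 : r < 1 := lt_of_le_of_lt hr.2 hL1
    have c1 : ContinuousAt (fun x : ℝ => x ^ (((d:ℝ)^2 - 1)/2)) r :=
      Real.continuousAt_rpow_const r _ (Or.inl (ne_of_gt hr0))
    have c2 := (hasDeriv_phi2 d n hd hn hr0 hr1).continuousAt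
    have : ContinuousAt (phi d n) r := by
      have : phi d n = fun x => x ^ (((d:ℝ)^2 - 1)/2) + phi2 d n x := by
        funext x; simp [phi, phi2]
      rw [this]
      exact c1.add c2
    exact this.continuousWithinAt
  have hsub := intermediate_value_Ioo hr₀L.le hcont
  have hmem : T ∈ Set.Ioo (phi d n r₀) (phi d n (lam d)) := ⟨h1, h2⟩
  obtain ⟨rs, hrs, hrseq⟩ := hsub hmem
  exact ⟨rs, ⟨lt_trans hr₀0 hrs.1, hrs.2⟩, hrseq⟩

lemma lam_two : lam 2 = 1/2 := by rw [lam]; norm_num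

lemma lam_three_sq : lam 3 ^ 2 = 1/3 := by
  rw [lam]
  push_cast
  rw [← Real.rpow_natCast ((3:ℝ) ^ (-(1:ℝ)/((3:ℝ)-1))) 2, ← Real.rpow_mul (by norm_num)]
  norm_num

lemma nat_le_two_pow (d : ℕ) (hd : 4 ≤ d) : d ≤ 2 ^ (d - 2) := by
  obtain ⟨k, rfl⟩ : ∃ k, d = k + 4 := ⟨d - 4, by omega⟩
  clear hd
  induction k with
  | zero => norm_num
  | succ k ih =>
    have : 2 ^ (k + 1 + 4 - 2) = 2 * 2 ^ (k + 4 - 2) := by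
      rw [← pow_succ']
      congr 1
    omega

lemma final_ineq (d : ℕ) (hd : 2 ≤ d) (s m : ℝ) (hs : s = 1 - m) (hm0 : 0 < m)
    (hs0 : 0 < s) (hcon : m < lam d ^ 2 * s) :
    s ^ (((d:ℝ)+1)/2) + ((d:ℝ) - s) ^ ((1:ℝ)/2) * m ^ ((d:ℝ)/2) < 1 := by
  have hD := dcast d hd
  have hs1 : s < 1 := by linarith
  have hDs : 0 < (d:ℝ) - s := by linarith
  have hsqrt1 : ((d:ℝ) - s) ^ ((1:ℝ)/2) = Real.sqrt ((d:ℝ) - s) :=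
    (Real.sqrt_eq_rpow _).symm
  have hsqrt2 : m ^ ((d:ℝ)/2) = Real.sqrt (m ^ d) := by
    rw [show (d:ℝ)/2 = (d:ℝ) * (1/2) by ring, Real.rpow_mul hm0.le,
      Real.rpow_natCast, Real.sqrt_eq_rpow]
  rw [hsqrt1, hsqrt2, ← Real.sqrt_mul hDs.le]
  rcases eq_or_lt_of_le hd with h2 | h3
  · -- d = 2
    subst h2
    have hm5 : m < 1/5 := by
      rw [lam_two] at hcon; nlinarith

    have k1 : Real.sqrt ((((2:ℕ):ℝ) - s) * m ^ (2:ℕ)) ≤ (1 + m/2) * m := by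
      calc Real.sqrt ((((2:ℕ):ℝ) - s) * m ^ (2:ℕ))
          ≤ Real.sqrt (((1 + m/2) * m)^2) := by
            apply Real.sqrt_le_sqrt
            push_cast
            rw [hs]
            nlinarith [sq_nonneg m]
      _ = (1 + m/2) * m := Real.sqrt_sq (by positivity)
    have k2 : s ^ ((((2:ℕ):ℝ)+1)/2) ≤ 1 - 3*m/2 + 3*m^2/4 := by
      rw [show ((((2:ℕ):ℝ))+1)/2 = ((3:ℕ):ℝ) * (1/2) by push_cast; norm_num,
        Real.rpow_mul hs0.le, Real.rpow_natCast, ← Real.sqrt_eq_rpow]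
      calc Real.sqrt (s ^ (3:ℕ)) ≤ Real.sqrt ((1 - 3*m/2 + 3*m^2/4)^2) := by
            apply Real.sqrt_le_sqrt
            rw [hs]
            nlinarith [mul_pos hm0 hm0, hm5, sq_nonneg (m*m), hm0]
      _ = 1 - 3*m/2 + 3*m^2/4 := Real.sqrt_sq (by nlinarith)
    nlinarith [k1, k2, hm0, hm5, hs]
  · -- 3 ≤ d
    have hstep1 : s ^ (((d:ℝ)+1)/2) ≤ s := by
      calc s ^ (((d:ℝ)+1)/2) ≤ s ^ (1:ℝ) :=
            Real.rpow_le_rpow_of_exponent_ge hs0 hs1.le (p_ge_one d hd)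
      _ = s := Real.rpow_one s
    have hpoly : ((d:ℝ) - s) * m ^ d < m ^ 2 := by
      rcases eq_or_lt_of_le (show 3 ≤ d by omega) with h3' | h4
      · -- d = 3
        subst h3'
        have hm4 : m < 1/4 := by
          have := lam_three_sq
          rw [this] at hcon; nlinarith
        have : ((3:ℕ):ℝ) = 3 := by norm_num
        rw [this, hs]
        nlinarith [pow_pos hm0 2, pow_pos hm0 3, sq_nonneg m]
      · -- 4 ≤ d
        have hd4 : 4 ≤ d := by omega
        have hm12 : m < 1/2 := by
          have hll : lam d ^ 2 < 1 := by
            nlinarith [lam_pos d hd, lam_lt_one d hd]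
          nlinarith [mul_pos (lam_pos d hd) (lam_pos d hd)]
        have c1 : m ^ (d-2) < (1/2:ℝ) ^ (d-2) :=
          pow_lt_pow_left₀ hm12 hm0.le (by omega)
        have c2 : ((d:ℕ):ℝ) ≤ 2 ^ (d-2) := by
          exact_mod_cast nat_le_two_pow d hd4
        have c3 : ((d:ℝ) - s) * m ^ (d-2) < 1 := by
          have e1 : ((d:ℝ) - s) * m ^ (d-2) < (d:ℝ) * (1/2:ℝ) ^ (d-2) :=
            mul_lt_mul'' (by linarith) c1 hDs.le (pow_nonneg hm0.le _)
          have e2 : (d:ℝ) * (1/2:ℝ) ^ (d-2) ≤ 1 := by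
            have hp : (0:ℝ) < 2 ^ (d-2) := by positivity
            rw [show ((1:ℝ)/2) ^ (d-2) = ((2:ℝ) ^ (d-2))⁻¹ by
                rw [one_div, inv_pow], ← div_eq_mul_inv, div_le_one hp]
            exact c2
          linarith
        have hmd : m ^ d = m ^ (d-2) * m ^ 2 := by
          rw [← pow_add]; congr 1; omega
        calc ((d:ℝ) - s) * m ^ d = (((d:ℝ) - s) * m ^ (d-2)) * m ^ 2 := by
              rw [hmd]; ring
        _ < 1 * m ^ 2 := mul_lt_mul_of_pos_right c3 (pow_pos hm0 2)
        _ = m ^ 2 := one_mul _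
    have hstep2 : Real.sqrt (((d:ℝ) - s) * m ^ d) < m := by
      have := Real.sqrt_lt_sqrt (by positivity) hpoly
      rwa [Real.sqrt_sq hm0.le] at this
    linarith

lemma rho_lt (d n : ℕ) (hd : 2 ≤ d) (hn : 1 ≤ n) (ρ : ℝ) (hρ : 0 < ρ)
    (heq : ((d:ℝ) - 1) * ρ ^ (d+1) + (d:ℝ) * (n:ℝ) * ρ ^ (d-1) - (n:ℝ) = 0) :
    ρ < lam d ∧ phi d n ρ < lam d ^ (((d:ℝ)^2 - 1)/2) := by
  have hD := dcast d hd
  have hD0 : (0:ℝ) < d := by linarith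
  have hn1 : (1:ℝ) ≤ (n:ℝ) := by exact_mod_cast hn
  have hρ1 : ρ < 1 := by
    by_contra h
    push_neg at h
    have h1 : (1:ℝ) ≤ ρ ^ (d+1) := one_le_pow₀ h
    have h2 : (1:ℝ) ≤ ρ ^ (d-1) := one_le_pow₀ h
    have h3 : ((d:ℝ)-1) * 1 ≤ ((d:ℝ)-1) * ρ^(d+1) :=
      mul_le_mul_of_nonneg_left h1 (by linarith)
    have h4 : (d:ℝ) * (n:ℝ) * 1 ≤ (d:ℝ) * (n:ℝ) * ρ^(d-1) :=
      mul_le_mul_of_nonneg_left h2 (by positivity)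
    nlinarith [mul_le_mul hn1 (show (1:ℝ) ≤ (d:ℝ)-1 by linarith) (by norm_num) (by positivity)]
  set S := ρ ^ (d-1) with hSdef
  have hS0 : 0 < S := pow_pos hρ _
  have hmn : (1 - (d:ℝ)*S) * (n:ℝ) = ((d:ℝ)-1) * ρ^(d+1) := by linear_combination -heq
  have hm0 : 0 < 1 - (d:ℝ)*S := by
    nlinarith [mul_pos (show (0:ℝ) < (d:ℝ)-1 by linarith) (pow_pos hρ (d+1))]
  have hS1 : S < 1 := by nlinarith
  have hSD : S < ((d:ℝ))⁻¹ := by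
    rw [inv_eq_one_div, lt_div_iff₀ hD0]; linarith
  have hρL : ρ < lam d := by
    apply lt_of_pow_lt_pow_left₀ (d-1) (lam_pos d hd).le
    rw [lam_pow d hd]; exact hSD
  refine ⟨hρL, ?_⟩
  have hsv0 : 0 < (d:ℝ)*S := by positivity
  -- final inequality
  have hcon : 1 - (d:ℝ)*S < lam d ^ 2 * ((d:ℝ)*S) := by
    have c1 : ρ^2 < lam d ^ 2 := pow_lt_pow_left₀ hρL hρ.le two_ne_zero
    have c2 : 1 - (d:ℝ)*S ≤ ((d:ℝ)-1) * ρ^(d+1) := by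
      nlinarith [mul_nonneg hm0.le (sub_nonneg.2 hn1), hmn]
    have c3 : ρ^(d+1) = S * ρ^2 := by rw [hSdef, ← pow_add]; congr 1; omega
    have c4 : ((d:ℝ)-1) * (S * ρ^2) < ((d:ℝ)-1) * (S * lam d ^2) := by
      apply mul_lt_mul_of_pos_left _ (by linarith)
      exact mul_lt_mul_of_pos_left c1 hS0
    have c5 : ((d:ℝ)-1) * (S * lam d ^2) ≤ (d:ℝ) * (S * lam d ^2) := by
      apply mul_le_mul_of_nonneg_right (by linarith)
      positivity
    calc 1 - (d:ℝ)*S ≤ ((d:ℝ)-1) * ρ^(d+1) := c2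
    _ = ((d:ℝ)-1) * (S * ρ^2) := by rw [c3]
    _ < ((d:ℝ)-1) * (S * lam d ^2) := c4
    _ ≤ (d:ℝ) * (S * lam d ^2) := c5
    _ = lam d ^2 * ((d:ℝ)*S) := by ring
  have hfin := final_ineq d hd ((d:ℝ)*S) (1 - (d:ℝ)*S) (by ring) hm0 hsv0 hcon
  -- abbreviations
  have hP1 : (1:ℝ) ≤ ((d:ℝ)+1)/2 := by linarith
  -- ρ^A = S^P
  have hSP : ρ ^ (((d:ℝ)^2 - 1)/2) = S ^ (((d:ℝ)+1)/2) := by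
    rw [a_eq d hd, Real.rpow_mul hρ.le, Real.rpow_natCast]
  -- numerator
  have h2d : ρ^(2*d-1) = ρ^d * S := by
    rw [hSdef, ← pow_add]; congr 1; omega
  have hnum : (ρ^d - ρ^(2*d-1)) ^ (((d:ℝ)+1)/2)
      = (ρ^d) ^ (((d:ℝ)+1)/2) * (1-S) ^ (((d:ℝ)+1)/2) := by
    rw [show ρ^d - ρ^(2*d-1) = ρ^d * (1 - S) by rw [h2d]; ring,
      Real.mul_rpow (pow_pos hρ d).le (by linarith)]
  -- denominator
  have hDs0 : (0:ℝ) < (d:ℝ) - (d:ℝ)*S := by nlinarith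
  have hden_e : ρ^(d+1) + (n:ℝ) = ρ^(d+1) * (((d:ℝ) - (d:ℝ)*S)/(1 - (d:ℝ)*S)) := by
    rw [mul_div_assoc', eq_div_iff (ne_of_gt hm0)]
    linear_combination hmn
  have hden : (ρ^(d+1) + (n:ℝ)) ^ ((d:ℝ)/2)
      = (ρ^(d+1)) ^ ((d:ℝ)/2) * (((d:ℝ) - (d:ℝ)*S)/(1 - (d:ℝ)*S)) ^ ((d:ℝ)/2) := by
    rw [hden_e, Real.mul_rpow (pow_pos hρ _).le (div_nonneg hDs0.le hm0.le)]
  -- (ρ^d)^P = (ρ^(d+1))^(d/2)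
  have hkey : (ρ^d : ℝ) ^ (((d:ℝ)+1)/2) = (ρ^(d+1)) ^ ((d:ℝ)/2) := by
    rw [← Real.rpow_natCast ρ d, ← Real.rpow_natCast ρ (d+1), ← Real.rpow_mul hρ.le,
      ← Real.rpow_mul hρ.le]
    congr 1
    push_cast; ring
  have hXpos : (0:ℝ) < (ρ^(d+1)) ^ ((d:ℝ)/2) := Real.rpow_pos_of_pos (pow_pos hρ _) _
  have hRpos : (0:ℝ) < (((d:ℝ) - (d:ℝ)*S)/(1 - (d:ℝ)*S)) ^ ((d:ℝ)/2) :=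
    Real.rpow_pos_of_pos (div_pos hDs0 hm0) _
  have hterm : (ρ^d - ρ^(2*d-1)) ^ (((d:ℝ)+1)/2) / (ρ^(d+1) + (n:ℝ)) ^ ((d:ℝ)/2)
      = (1-S) ^ (((d:ℝ)+1)/2) * ((1 - (d:ℝ)*S)/((d:ℝ) - (d:ℝ)*S)) ^ ((d:ℝ)/2) := by
    rw [hnum, hden, hkey,
      show ((1 - (d:ℝ)*S)/((d:ℝ) - (d:ℝ)*S)) ^ ((d:ℝ)/2)
        = ((((d:ℝ) - (d:ℝ)*S)/(1 - (d:ℝ)*S)) ^ ((d:ℝ)/2))⁻¹ by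
        rw [← Real.inv_rpow (div_pos hDs0 hm0).le, inv_div]]
    field_simp
  -- convert everything to s-form
  have hsplit1 : S ^ (((d:ℝ)+1)/2)
      = ((d:ℝ)*S) ^ (((d:ℝ)+1)/2) * (((d:ℝ))⁻¹) ^ (((d:ℝ)+1)/2) := by
    rw [← Real.mul_rpow hsv0.le (by positivity)]
    congr 1
    field_simp
  have hsplit2 : (1 - S) ^ (((d:ℝ)+1)/2)
      = ((d:ℝ) - (d:ℝ)*S) ^ (((d:ℝ)+1)/2) * (((d:ℝ))⁻¹) ^ (((d:ℝ)+1)/2) := by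
    rw [← Real.mul_rpow hDs0.le (by positivity)]
    congr 1
    field_simp
  have hsplit3 : ((1 - (d:ℝ)*S)/((d:ℝ) - (d:ℝ)*S)) ^ ((d:ℝ)/2)
      = (1 - (d:ℝ)*S) ^ ((d:ℝ)/2) / ((d:ℝ) - (d:ℝ)*S) ^ ((d:ℝ)/2) :=
    Real.div_rpow hm0.le hDs0.le _
  have hhalf : ((d:ℝ) - (d:ℝ)*S) ^ (((d:ℝ)+1)/2) / ((d:ℝ) - (d:ℝ)*S) ^ ((d:ℝ)/2)
      = ((d:ℝ) - (d:ℝ)*S) ^ ((1:ℝ)/2) := by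
    rw [← Real.rpow_sub hDs0]
    congr 1
    ring
  -- T
  have hT : lam d ^ (((d:ℝ)^2 - 1)/2) = (((d:ℝ))⁻¹) ^ (((d:ℝ)+1)/2) := by
    rw [a_eq d hd, Real.rpow_mul (lam_pos d hd).le, Real.rpow_natCast, lam_pow d hd]
  have hE : (0:ℝ) < (((d:ℝ))⁻¹) ^ (((d:ℝ)+1)/2) :=
    Real.rpow_pos_of_pos (by positivity) _
  have hterm2 : (1-S) ^ (((d:ℝ)+1)/2) * ((1 - (d:ℝ)*S)/((d:ℝ) - (d:ℝ)*S)) ^ ((d:ℝ)/2)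
      = (((d:ℝ))⁻¹) ^ (((d:ℝ)+1)/2) *
        (((d:ℝ) - (d:ℝ)*S) ^ ((1:ℝ)/2) * (1 - (d:ℝ)*S) ^ ((d:ℝ)/2)) := by
    calc (1-S) ^ (((d:ℝ)+1)/2) * ((1 - (d:ℝ)*S)/((d:ℝ) - (d:ℝ)*S)) ^ ((d:ℝ)/2)
        = (((d:ℝ) - (d:ℝ)*S) ^ (((d:ℝ)+1)/2) / ((d:ℝ) - (d:ℝ)*S) ^ ((d:ℝ)/2)) *
          ((((d:ℝ))⁻¹) ^ (((d:ℝ)+1)/2) * (1 - (d:ℝ)*S) ^ ((d:ℝ)/2)) := by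
          rw [hsplit2, hsplit3]; ring
    _ = (((d:ℝ))⁻¹) ^ (((d:ℝ)+1)/2) *
        (((d:ℝ) - (d:ℝ)*S) ^ ((1:ℝ)/2) * (1 - (d:ℝ)*S) ^ ((d:ℝ)/2)) := by
          rw [hhalf]; ring
  have hphi : phi d n ρ = (((d:ℝ))⁻¹) ^ (((d:ℝ)+1)/2) *
      (((d:ℝ)*S) ^ (((d:ℝ)+1)/2)
        + ((d:ℝ) - (d:ℝ)*S) ^ ((1:ℝ)/2) * (1 - (d:ℝ)*S) ^ ((d:ℝ)/2)) := by
    rw [phi, hSP, hterm, hterm2, hsplit1]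
    ring
  rw [hphi, hT]
  calc (((d:ℝ))⁻¹) ^ (((d:ℝ)+1)/2) *
      (((d:ℝ)*S) ^ (((d:ℝ)+1)/2)
        + ((d:ℝ) - (d:ℝ)*S) ^ ((1:ℝ)/2) * (1 - (d:ℝ)*S) ^ ((d:ℝ)/2))
      < (((d:ℝ))⁻¹) ^ (((d:ℝ)+1)/2) * 1 := by
        apply mul_lt_mul_of_pos_left _ hE
        exact hfin
  _ = (((d:ℝ))⁻¹) ^ (((d:ℝ)+1)/2) := mul_one _


/-- There is a unique `r*` in `(0, λ_d)` where `f_{d,n}` and `g_d` intersect; below `r*`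
one has `f < g`, above it (up to `λ_d`) one has `g < f`, and `ρ(d,n) < r*`. -/
theorem crossing_point (d n : ℕ) (hd : 2 ≤ d) (hn : 1 ≤ n) (ρ : ℝ) (hρ : 0 < ρ)
    (heq : ((d : ℝ) - 1) * ρ ^ (d + 1) + (d : ℝ) * (n : ℝ) * ρ ^ (d - 1) - (n : ℝ) = 0) :
    ∃ rs : ℝ,
      rs ∈ Set.Ioo (0 : ℝ) ((d : ℝ) ^ (-(1 : ℝ) / ((d : ℝ) - 1))) ∧
      (rs - rs ^ d) / (rs ^ (d + 1) + (n : ℝ)) ^ ((d : ℝ) / ((d : ℝ) + 1)) =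
        (((d : ℝ) ^ (-(1 : ℝ) / ((d : ℝ) - 1)) / rs) ^ (((d : ℝ) ^ 2 - 1) / 2) - 1) ^
          ((2 : ℝ) / ((d : ℝ) + 1)) ∧
      (∀ r ∈ Set.Ioo (0 : ℝ) ((d : ℝ) ^ (-(1 : ℝ) / ((d : ℝ) - 1))),
        (r - r ^ d) / (r ^ (d + 1) + (n : ℝ)) ^ ((d : ℝ) / ((d : ℝ) + 1)) =
          (((d : ℝ) ^ (-(1 : ℝ) / ((d : ℝ) - 1)) / r) ^ (((d : ℝ) ^ 2 - 1) / 2) - 1) ^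
            ((2 : ℝ) / ((d : ℝ) + 1)) → r = rs) ∧
      (∀ r ∈ Set.Ioo (0 : ℝ) rs,
        (r - r ^ d) / (r ^ (d + 1) + (n : ℝ)) ^ ((d : ℝ) / ((d : ℝ) + 1)) <
          (((d : ℝ) ^ (-(1 : ℝ) / ((d : ℝ) - 1)) / r) ^ (((d : ℝ) ^ 2 - 1) / 2) - 1) ^
            ((2 : ℝ) / ((d : ℝ) + 1))) ∧
      (∀ r : ℝ, rs < r → r ≤ (d : ℝ) ^ (-(1 : ℝ) / ((d : ℝ) - 1)) →
        (((d : ℝ) ^ (-(1 : ℝ) / ((d : ℝ) - 1)) / r) ^ (((d : ℝ) ^ 2 - 1) / 2) - 1) ^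
            ((2 : ℝ) / ((d : ℝ) + 1)) <
          (r - r ^ d) / (r ^ (d + 1) + (n : ℝ)) ^ ((d : ℝ) / ((d : ℝ) + 1))) ∧
      ρ < rs := by
  obtain ⟨rs, hrs, hrseq⟩ := exists_rs d n hd hn
  have hmono := phi_strictMono d n hd hn
  have hrsIoc : rs ∈ Set.Ioc (0:ℝ) (lam d) := ⟨hrs.1, hrs.2.le⟩
  refine ⟨rs, hrs, ?_, ?_, ?_, ?_, ?_⟩
  · -- equality at rs
    exact (key_eq d n hd hrs.1 hrs.2.le).2 hrseq
  · -- uniqueness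
    intro r hr hfeq
    have h1 : phi d n r = phi d n rs := by
      rw [(key_eq d n hd hr.1 hr.2.le).1 hfeq, hrseq]
    exact hmono.injOn ⟨hr.1, hr.2.le⟩ hrsIoc h1
  · -- below
    intro r hr
    have hrIoc : r ∈ Set.Ioc (0:ℝ) (lam d) := ⟨hr.1, hr.2.le.trans hrs.2.le⟩
    have h1 : phi d n r < lam d ^ (((d:ℝ)^2 - 1)/2) := by
      rw [← hrseq]
      exact hmono hrIoc hrsIoc hr.2
    exact (key_lt d n hd hr.1 hrIoc.2).2 h1
  · -- above
    intro r hrr hrl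
    have hrIoc : r ∈ Set.Ioc (0:ℝ) (lam d) := ⟨hrs.1.trans hrr, hrl⟩
    have h1 : lam d ^ (((d:ℝ)^2 - 1)/2) < phi d n r := by
      rw [← hrseq]
      exact hmono hrsIoc hrIoc hrr
    exact (key_gt d n hd hrIoc.1 hrIoc.2).2 h1
  · -- rho
    obtain ⟨hρL, hρphi⟩ := rho_lt d n hd hn ρ hρ heq
    by_contra hcon
    push_neg at hcon
    have hρIoc : ρ ∈ Set.Ioc (0:ℝ) (lam d) := ⟨hρ, hρL.le⟩
    rcases eq_or_lt_of_le hcon with he | hlt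
    · rw [← he, hrseq] at hρphi
      exact lt_irrefl _ hρphi
    · have := hmono hrsIoc hρIoc hlt
      rw [hrseq] at this
      exact lt_irrefl _ (this.trans hρphi)
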